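/- Let Ω ⊂ ℝⁿ be a bounded measurable set and let Φ : ℝⁿ → [0,∞) be a differentiable n-dimensional N-function with Young conjugate Φ_•. Let V_h, V : Ω → ℝⁿ be measurable functions such that each V_h satisfies ∫_Ω Φ(V_h/k_h) dx < ∞ for some k_h > 0, V satisfies ∫_Ω Φ(V/k) dx < ∞ for some k > 0, and such that ∫_Ω V_h · W dx → ∫_Ω V · W dx for every measurable essentially bounded W : Ω → ℝⁿ. Then ∫_Ω Φ(V) dx ≤ liminf_{h→∞} ∫_Ω Φ(V_h) dx (as an inequality in [0, +∞]). -/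

import Mathlib

open MeasureTheory Filter Topology
open scoped RealInnerProductSpace ENNReal

/-- An `n`-dimensional (finite-valued) Young function: an even, convex function
`Φ : ℝⁿ → [0,∞)` with `Φ(0) = 0` such that for every `t > 0` the sublevel set
`{ξ : Φ ξ < t}` is bounded and is a neighborhood of `0`. -/
structure IsYoungFunction {n : ℕ} (Φ : EuclideanSpace ℝ (Fin n) → ℝ) : Prop where
  nonneg : ∀ ξ, 0 ≤ Φ ξ
  even : ∀ ξ, Φ (-ξ) = Φ ξ
  convex : ConvexOn ℝ Set.univ Φ
  map_zero : Φ 0 = 0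
  sublevel_bounded : ∀ t > 0, Bornology.IsBounded {ξ | Φ ξ < t}
  sublevel_mem_nhds : ∀ t > 0, {ξ | Φ ξ < t} ∈ 𝓝 (0 : EuclideanSpace ℝ (Fin n))

/-- An `n`-dimensional `N`-function: a finite-valued Young function vanishing only
at `0`, with `Φ(ξ)/|ξ| → ∞` as `|ξ| → ∞` and `Φ(ξ)/|ξ| → 0` as `|ξ| → 0`. -/
structure IsNFunction {n : ℕ} (Φ : EuclideanSpace ℝ (Fin n) → ℝ)
    extends IsYoungFunction Φ : Prop where
  eq_zero : ∀ ξ, Φ ξ = 0 → ξ = 0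
  tendsto_atTop : Tendsto (fun ξ => Φ ξ / ‖ξ‖)
    (Bornology.cobounded (EuclideanSpace ℝ (Fin n))) atTop
  tendsto_zero : Tendsto (fun ξ => Φ ξ / ‖ξ‖)
    (𝓝[≠] (0 : EuclideanSpace ℝ (Fin n))) (𝓝 0)

/-- Lower semicontinuity of `V ↦ ∫_Ω Φ(V) dx` with respect to weak convergence
against measurable essentially bounded functions: if each `V_h` and `V` belong
to the anisotropic Orlicz space on a bounded measurable set `Ω`, and
`∫_Ω V_h · W dx → ∫_Ω V · W dx` for every measurable essentially bounded `W`,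
then `∫_Ω Φ(V) dx ≤ liminf_h ∫_Ω Φ(V_h) dx` in `[0,∞]`. -/
private lemma my_subgrad {n : ℕ} {Φ : EuclideanSpace ℝ (Fin n) → ℝ}
    (hc : ConvexOn ℝ Set.univ Φ) (hd : Differentiable ℝ Φ)
    (a b : EuclideanSpace ℝ (Fin n)) :
    Φ a + fderiv ℝ Φ a (b - a) ≤ Φ b := by
  set L : ℝ → EuclideanSpace ℝ (Fin n) := fun t => t • (b - a) + a with hLdef
  have hLeq : ∀ t : ℝ, L t = AffineMap.lineMap a b t := fun t => by
    simp [hLdef, AffineMap.lineMap_apply_module']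
  have hφc : ConvexOn ℝ Set.univ (Φ ∘ L) := by
    have h := hc.comp_affineMap (AffineMap.lineMap a b : ℝ →ᵃ[ℝ] _)
    have : (Φ ∘ L) = Φ ∘ (AffineMap.lineMap a b : ℝ →ᵃ[ℝ] _) := by
      funext t; simp [hLeq t]
    rw [this]
    simpa using h
  have hderiv : HasDerivAt (Φ ∘ L) (fderiv ℝ Φ (L 0) (b - a)) 0 := by
    have hL : HasDerivAt L (b - a) 0 := by
      simpa [hLdef] using ((hasDerivAt_id (0:ℝ)).smul_const (b - a)).add_const a
    exact (hd (L 0)).hasFDerivAt.comp_hasDerivAt 0 hL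
  have hs := hφc.le_slope_of_hasDerivAt (Set.mem_univ (0:ℝ)) (Set.mem_univ (1:ℝ))
    one_pos hderiv
  have hL0 : L 0 = a := by simp [hLdef]
  have hL1 : L 1 = b := by simp [hLdef]
  rw [slope_def_field] at hs
  simp only [Function.comp, hL0, hL1] at hs
  have : fderiv ℝ Φ a (b - a) ≤ Φ b - Φ a := by
    simpa using hs
  linarith

private lemma my_fderiv_bound {n : ℕ} {Φ : EuclideanSpace ℝ (Fin n) → ℝ}
    (hc : ConvexOn ℝ Set.univ Φ) (hd : Differentiable ℝ Φ)
    (hnn : ∀ ξ, 0 ≤ Φ ξ) (R : ℝ) :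
    ∃ M : ℝ, 0 ≤ M ∧ ∀ ξ : EuclideanSpace ℝ (Fin n), ‖ξ‖ ≤ R → ‖fderiv ℝ Φ ξ‖ ≤ M := by
  obtain ⟨C, hC⟩ := (isCompact_closedBall (0 : EuclideanSpace ℝ (Fin n))
    (R + 1)).exists_bound_of_continuousOn hd.continuous.continuousOn
  refine ⟨max C 0, le_max_right _ _, fun ξ hξ => ?_⟩
  apply ContinuousLinearMap.opNorm_le_bound _ (le_max_right _ _)
  intro v
  rcases eq_or_ne v 0 with rfl | hv
  · simp
  have hvnorm : 0 < ‖v‖ := norm_pos_iff.mpr hv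
  set u : EuclideanSpace ℝ (Fin n) := ‖v‖⁻¹ • v with hu
  have hun : ‖u‖ = 1 := by
    rw [hu, norm_smul, norm_inv, norm_norm, inv_mul_cancel₀ hvnorm.ne']
  have hbound : ∀ w : EuclideanSpace ℝ (Fin n), ‖w‖ = 1 → fderiv ℝ Φ ξ w ≤ max C 0 := by
    intro w hw
    have h1 := my_subgrad hc hd ξ (ξ + w)
    have h2 : ‖ξ + w‖ ≤ R + 1 := by
      calc ‖ξ + w‖ ≤ ‖ξ‖ + ‖w‖ := norm_add_le _ _
        _ ≤ R + 1 := by rw [hw]; linarith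
    have h3 := hC (ξ + w) (by simpa [Metric.mem_closedBall, dist_eq_norm] using h2)
    have h4 : Φ (ξ + w) ≤ C := (le_abs_self _).trans (by simpa using h3)
    have h5 := hnn ξ
    simp only [add_sub_cancel_left] at h1
    have : fderiv ℝ Φ ξ w ≤ C := by linarith
    exact this.trans (le_max_left _ _)
  have hval : fderiv ℝ Φ ξ v = ‖v‖ * fderiv ℝ Φ ξ u := by
    rw [hu, ContinuousLinearMap.map_smul, smul_eq_mul, ← mul_assoc, mul_inv_cancel₀ hvnorm.ne', one_mul]
  have hpos := hbound u hun
  have hneg : -(fderiv ℝ Φ ξ u) ≤ max C 0 := by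
    have := hbound (-u) (by rw [norm_neg, hun])
    simpa using this
  have habs : |fderiv ℝ Φ ξ u| ≤ max C 0 := abs_le.mpr ⟨by linarith, hpos⟩
  calc ‖fderiv ℝ Φ ξ v‖ = ‖v‖ * |fderiv ℝ Φ ξ u| := by
        rw [hval, Real.norm_eq_abs, abs_mul, abs_of_pos hvnorm]
    _ ≤ ‖v‖ * max C 0 := by gcongr
    _ = max C 0 * ‖v‖ := mul_comm _ _

private lemma my_ofReal_integral_le {α : Type*} [MeasurableSpace α] {μ : Measure α}
    {u : α → ℝ} (hu : Integrable u μ) :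
    ENNReal.ofReal (∫ x, u x ∂μ) ≤ ∫⁻ x, ENNReal.ofReal (u x) ∂μ := by
  have hpos : Integrable (fun x => max (u x) 0) μ := hu.pos_part
  have hmax : ∀ a : ℝ, ENNReal.ofReal (max a 0) = ENNReal.ofReal a := by
    intro a
    rcases le_total a 0 with h | h
    · rw [max_eq_right h, ENNReal.ofReal_zero, ENNReal.ofReal_of_nonpos h]
    · rw [max_eq_left h]
  calc ENNReal.ofReal (∫ x, u x ∂μ)
      ≤ ENNReal.ofReal (∫ x, max (u x) 0 ∂μ) :=
        ENNReal.ofReal_le_ofReal (integral_mono hu hpos fun x => le_max_left _ _)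
    _ = ∫⁻ x, ENNReal.ofReal (max (u x) 0) ∂μ :=
        ofReal_integral_eq_lintegral_ofReal hpos (ae_of_all _ fun x => le_max_right _ _)
    _ = ∫⁻ x, ENNReal.ofReal (u x) ∂μ := by simp_rw [hmax]


theorem lintegral_liminf_of_weak_convergence {n : ℕ}
    (Ω : Set (EuclideanSpace ℝ (Fin n))) (hΩm : MeasurableSet Ω)
    (hΩb : Bornology.IsBounded Ω)
    (Φ : EuclideanSpace ℝ (Fin n) → ℝ) (hΦ : IsNFunction Φ)
    (hdiff : Differentiable ℝ Φ)
    (V : ℕ → EuclideanSpace ℝ (Fin n) → EuclideanSpace ℝ (Fin n))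
    (Vlim : EuclideanSpace ℝ (Fin n) → EuclideanSpace ℝ (Fin n))
    (hV : ∀ h, Measurable (V h)) (hVlim : Measurable Vlim)
    (hVorl : ∀ h, ∃ k : ℝ, 0 < k ∧
      ∫⁻ x in Ω, ENNReal.ofReal (Φ (k⁻¹ • V h x)) < ⊤)
    (hVlimorl : ∃ k : ℝ, 0 < k ∧
      ∫⁻ x in Ω, ENNReal.ofReal (Φ (k⁻¹ • Vlim x)) < ⊤)
    (hweak : ∀ W : EuclideanSpace ℝ (Fin n) → EuclideanSpace ℝ (Fin n),
      Measurable W → (∃ C : ℝ, ∀ᵐ x ∂(volume.restrict Ω), ‖W x‖ ≤ C) →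
      Tendsto (fun h => ∫ x in Ω, ⟪V h x, W x⟫) atTop
        (𝓝 (∫ x in Ω, ⟪Vlim x, W x⟫))) :
    ∫⁻ x in Ω, ENNReal.ofReal (Φ (Vlim x)) ≤
      liminf (fun h => ∫⁻ x in Ω, ENNReal.ofReal (Φ (V h x))) atTop := by
  have hΦc : Continuous Φ := hdiff.continuous
  have hμfin : IsFiniteMeasure (volume.restrict Ω) := by
    constructor
    rw [Measure.restrict_apply_univ]
    exact hΩb.measure_lt_top
  -- superlinear growth bound
  obtain ⟨s, hgrow⟩ : ∃ s : ℝ, ∀ ξ : EuclideanSpace ℝ (Fin n), ‖ξ‖ ≤ s + Φ ξ := by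
    have hev : ∀ᶠ ξ in Bornology.cobounded (EuclideanSpace ℝ (Fin n)), 1 ≤ Φ ξ / ‖ξ‖ :=
      hΦ.tendsto_atTop.eventually_ge_atTop 1
    have hbdd : Bornology.IsBounded {ξ : EuclideanSpace ℝ (Fin n) | ¬ (1 ≤ Φ ξ / ‖ξ‖)} := by
      rw [Bornology.isBounded_def]
      have hcompl : {ξ : EuclideanSpace ℝ (Fin n) | ¬ (1 ≤ Φ ξ / ‖ξ‖)}ᶜ
          = {ξ : EuclideanSpace ℝ (Fin n) | 1 ≤ Φ ξ / ‖ξ‖} := by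
        ext ξ; simp
      rw [hcompl]
      exact hev
    obtain ⟨r, hr⟩ := hbdd.subset_closedBall 0
    refine ⟨max r 0, fun ξ => ?_⟩
    by_cases h : 1 ≤ Φ ξ / ‖ξ‖
    · rcases eq_or_lt_of_le (norm_nonneg ξ) with h0 | h0
      · have := hΦ.nonneg ξ
        rw [← h0]
        have : (0:ℝ) ≤ max r 0 := le_max_right _ _
        linarith [hΦ.nonneg ξ]
      · have : ‖ξ‖ ≤ Φ ξ := by
          have := (one_le_div h0).mp h
          linarith
        have h2 : (0:ℝ) ≤ max r 0 := le_max_right _ _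
        linarith
    · have := hr h
      rw [Metric.mem_closedBall, dist_zero_right] at this
      have := this.trans (le_max_left r 0)
      linarith [hΦ.nonneg ξ]
  -- integrability from Orlicz condition
  have hint : ∀ U : EuclideanSpace ℝ (Fin n) → EuclideanSpace ℝ (Fin n), Measurable U →
      (∃ k : ℝ, 0 < k ∧ ∫⁻ x in Ω, ENNReal.ofReal (Φ (k⁻¹ • U x)) < ⊤) →
      Integrable U (volume.restrict Ω) := by
    rintro U hUm ⟨k, hk, hfin⟩
    have hφm : Measurable (fun x => Φ (k⁻¹ • U x)) :=
      hΦc.measurable.comp (hUm.const_smul k⁻¹)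
    have hφint : Integrable (fun x => Φ (k⁻¹ • U x)) (volume.restrict Ω) := by
      refine ⟨hφm.aestronglyMeasurable, ?_⟩
      rw [hasFiniteIntegral_iff_ofReal (ae_of_all _ fun x => hΦ.nonneg _)]
      exact hfin
    have hboundint : Integrable (fun x => k * (s + Φ (k⁻¹ • U x))) (volume.restrict Ω) :=
      ((integrable_const s).add hφint).const_mul k
    refine hboundint.mono' hUm.aestronglyMeasurable (ae_of_all _ fun x => ?_)
    have h1 := hgrow (k⁻¹ • U x)
    have h2 : ‖k⁻¹ • U x‖ = k⁻¹ * ‖U x‖ := by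
      rw [norm_smul, norm_inv, Real.norm_eq_abs, abs_of_pos hk]
    rw [h2] at h1
    have h3 : ‖U x‖ = k * (k⁻¹ * ‖U x‖) := by field_simp
    calc ‖U x‖ = k * (k⁻¹ * ‖U x‖) := h3
      _ ≤ k * (s + Φ (k⁻¹ • U x)) := by
          apply mul_le_mul_of_nonneg_left h1 hk.le
  have hVint : ∀ h, Integrable (V h) (volume.restrict Ω) := fun h => hint _ (hV h) (hVorl h)
  have hVlimint : Integrable Vlim (volume.restrict Ω) := hint _ hVlim hVlimorl
  -- truncations
  set W : ℕ → EuclideanSpace ℝ (Fin n) → EuclideanSpace ℝ (Fin n) :=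
    fun R x => if ‖Vlim x‖ ≤ (R:ℝ) then Vlim x else 0 with hWdef
  have hWmeas : ∀ R, Measurable (W R) := fun R =>
    Measurable.ite (measurableSet_le hVlim.norm measurable_const) hVlim measurable_const
  have hWbd : ∀ R (x : EuclideanSpace ℝ (Fin n)), ‖W R x‖ ≤ (R:ℝ) := by
    intro R x
    simp only [hWdef]
    split
    · assumption
    · simp
  have hfd0 : fderiv ℝ Φ 0 = 0 := by
    have hmin : IsLocalMin Φ 0 := Filter.Eventually.of_forall fun ξ => by
      rw [hΦ.map_zero]; exact hΦ.nonneg ξ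
    exact hmin.fderiv_eq_zero
  -- gradient vector field of the truncation
  set G : ℕ → EuclideanSpace ℝ (Fin n) → EuclideanSpace ℝ (Fin n) :=
    fun R x => (InnerProductSpace.toDual ℝ (EuclideanSpace ℝ (Fin n))).symm
      (fderiv ℝ Φ (W R x)) with hGdef
  have hGeval : ∀ R x (v : EuclideanSpace ℝ (Fin n)), ⟪G R x, v⟫ = fderiv ℝ Φ (W R x) v := by
    intro R x v
    simp [hGdef, InnerProductSpace.toDual_symm_apply]
  have hGmeas : ∀ R, Measurable (G R) := fun R =>
    ((InnerProductSpace.toDual ℝ (EuclideanSpace ℝ (Fin n))).symm.continuous.measurable).comp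
      ((measurable_fderiv ℝ Φ).comp (hWmeas R))
  have hGbd : ∀ R : ℕ, ∃ M : ℝ, 0 ≤ M ∧ ∀ x, ‖G R x‖ ≤ M := by
    intro R
    obtain ⟨M, hM0, hM⟩ := my_fderiv_bound hΦ.convex hdiff hΦ.nonneg (R:ℝ)
    refine ⟨M, hM0, fun x => ?_⟩
    rw [hGdef]
    simp only
    rw [LinearIsometryEquiv.norm_map]
    exact hM _ (hWbd R x)
  have hGzero : ∀ R x, ⟪Vlim x - W R x, G R x⟫ = 0 := by
    intro R x
    by_cases hx : ‖Vlim x‖ ≤ (R:ℝ)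
    · have : W R x = Vlim x := if_pos hx
      rw [this, sub_self, inner_zero_left]
    · have hW0 : W R x = 0 := if_neg hx
      have : G R x = 0 := by
        rw [hGdef]
        simp only
        rw [hW0, hfd0]
        simp
      rw [this, inner_zero_right]
  -- per-truncation lower bound
  have key : ∀ R : ℕ, ∫⁻ x in Ω, ENNReal.ofReal (Φ (W R x)) ≤
      liminf (fun h => ∫⁻ x in Ω, ENNReal.ofReal (Φ (V h x))) atTop := by
    intro R
    obtain ⟨M, hM0, hM⟩ := hGbd R
    -- Φ ∘ W R is bounded, hence integrable
    obtain ⟨C, hC⟩ := (isCompact_closedBall (0 : EuclideanSpace ℝ (Fin n))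
      (R:ℝ)).exists_bound_of_continuousOn hΦc.continuousOn
    have hΦWm : Measurable (fun x => Φ (W R x)) := hΦc.measurable.comp (hWmeas R)
    have hΦW : Integrable (fun x => Φ (W R x)) (volume.restrict Ω) := by
      refine (integrable_const C).mono' hΦWm.aestronglyMeasurable (ae_of_all _ fun x => ?_)
      exact hC (W R x) (by simpa [Metric.mem_closedBall, dist_zero_right] using hWbd R x)
    have hinnerint : ∀ (U : EuclideanSpace ℝ (Fin n) → EuclideanSpace ℝ (Fin n)),
        Measurable U → Integrable U (volume.restrict Ω) →
        Integrable (fun x => ⟪U x, G R x⟫) (volume.restrict Ω) := by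
      intro U hUm hUint
      refine (hUint.norm.const_mul M).mono'
        ((hUm.inner (hGmeas R)).aestronglyMeasurable) (ae_of_all _ fun x => ?_)
      calc ‖⟪U x, G R x⟫‖ ≤ ‖U x‖ * ‖G R x‖ := norm_inner_le_norm _ _
        _ ≤ ‖U x‖ * M := by
            apply mul_le_mul_of_nonneg_left (hM x) (norm_nonneg _)
        _ = M * ‖U x‖ := mul_comm _ _
    have hWint : Integrable (W R) (volume.restrict Ω) := by
      refine (integrable_const (R:ℝ)).mono' (hWmeas R).aestronglyMeasurable
        (ae_of_all _ fun x => hWbd R x)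
    have hVG : ∀ h, Integrable (fun x => ⟪V h x, G R x⟫) (volume.restrict Ω) :=
      fun h => hinnerint _ (hV h) (hVint h)
    have hWG : Integrable (fun x => ⟪W R x, G R x⟫) (volume.restrict Ω) :=
      hinnerint _ (hWmeas R) hWint
    have hVlimG : Integrable (fun x => ⟪Vlim x, G R x⟫) (volume.restrict Ω) :=
      hinnerint _ hVlim hVlimint
    set u : ℕ → EuclideanSpace ℝ (Fin n) → ℝ :=
      fun h x => (Φ (W R x) - ⟪W R x, G R x⟫) + ⟪V h x, G R x⟫ with hudef
    have huint : ∀ h, Integrable (u h) (volume.restrict Ω) :=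
      fun h => (hΦW.sub hWG).add (hVG h)
    -- pointwise convexity inequality
    have hptwise : ∀ h x, u h x ≤ Φ (V h x) := by
      intro h x
      have h1 := my_subgrad hΦ.convex hdiff (W R x) (V h x)
      have h2 : fderiv ℝ Φ (W R x) (V h x - W R x) = ⟪V h x, G R x⟫ - ⟪W R x, G R x⟫ := by
        rw [← hGeval R x (V h x - W R x), inner_sub_right,
          real_inner_comm (V h x) (G R x), real_inner_comm (W R x) (G R x)]
      rw [h2] at h1
      simp only [hudef]
      linarith
    -- convergence of ∫ u h
    have hVlimG_eq : ∫ x in Ω, ⟪Vlim x, G R x⟫ = ∫ x in Ω, ⟪W R x, G R x⟫ := by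
      apply integral_congr_ae
      apply ae_of_all
      intro x
      have := hGzero R x
      rw [inner_sub_left] at this
      linarith
    have htend : Tendsto (fun h => ∫ x in Ω, u h x) atTop (𝓝 (∫ x in Ω, Φ (W R x))) := by
      have h1 : ∀ h, ∫ x in Ω, u h x =
          (∫ x in Ω, (Φ (W R x) - ⟪W R x, G R x⟫)) + ∫ x in Ω, ⟪V h x, G R x⟫ := by
        intro h
        rw [hudef]
        exact integral_add (hΦW.sub hWG) (hVG h)
      have h2 : Tendsto (fun h => (∫ x in Ω, (Φ (W R x) - ⟪W R x, G R x⟫)) +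
          ∫ x in Ω, ⟪V h x, G R x⟫) atTop
          (𝓝 ((∫ x in Ω, (Φ (W R x) - ⟪W R x, G R x⟫)) + ∫ x in Ω, ⟪Vlim x, G R x⟫)) :=
        tendsto_const_nhds.add (hweak (G R) (hGmeas R) ⟨M, ae_of_all _ hM⟩)
      have h3 : (∫ x in Ω, (Φ (W R x) - ⟪W R x, G R x⟫)) + ∫ x in Ω, ⟪Vlim x, G R x⟫
          = ∫ x in Ω, Φ (W R x) := by
        rw [hVlimG_eq, integral_sub hΦW hWG]
        ring
      rw [← h3]
      exact h2.congr (fun h => (h1 h).symm)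
    -- pass to ENNReal
    have hENN : ∀ h, ENNReal.ofReal (∫ x in Ω, u h x) ≤
        ∫⁻ x in Ω, ENNReal.ofReal (Φ (V h x)) := by
      intro h
      calc ENNReal.ofReal (∫ x in Ω, u h x)
          ≤ ∫⁻ x in Ω, ENNReal.ofReal (u h x) := my_ofReal_integral_le (huint h)
        _ ≤ ∫⁻ x in Ω, ENNReal.ofReal (Φ (V h x)) :=
            lintegral_mono fun x => ENNReal.ofReal_le_ofReal (hptwise h x)
    have htendENN : Tendsto (fun h => ENNReal.ofReal (∫ x in Ω, u h x)) atTop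
        (𝓝 (ENNReal.ofReal (∫ x in Ω, Φ (W R x)))) :=
      (ENNReal.continuous_ofReal.tendsto _).comp htend
    have hliminf : ENNReal.ofReal (∫ x in Ω, Φ (W R x)) ≤
        liminf (fun h => ∫⁻ x in Ω, ENNReal.ofReal (Φ (V h x))) atTop := by
      rw [← htendENN.liminf_eq]
      exact liminf_le_liminf (Eventually.of_forall hENN)
    rwa [ofReal_integral_eq_lintegral_ofReal hΦW
      (ae_of_all _ fun x => hΦ.nonneg _)] at hliminf
  -- monotone convergence in the truncation level
  have hWmono : Monotone (fun R : ℕ => fun x => ENNReal.ofReal (Φ (W R x))) := by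
    intro R R' hRR' x
    simp only [hWdef]
    by_cases hx : ‖Vlim x‖ ≤ (R:ℝ)
    · rw [if_pos hx, if_pos (hx.trans (by exact_mod_cast hRR'))]
    · rw [if_neg hx, hΦ.map_zero]
      simp
  have hsup : ∀ x, (⨆ R : ℕ, ENNReal.ofReal (Φ (W R x))) = ENNReal.ofReal (Φ (Vlim x)) := by
    intro x
    apply le_antisymm
    · refine iSup_le fun R => ENNReal.ofReal_le_ofReal ?_
      simp only [hWdef]
      by_cases hx : ‖Vlim x‖ ≤ (R:ℝ)
      · rw [if_pos hx]
      · rw [if_neg hx, hΦ.map_zero]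
        exact hΦ.nonneg _
    · obtain ⟨R, hR⟩ := exists_nat_ge ‖Vlim x‖
      refine le_iSup_of_le R (le_of_eq ?_)
      simp only [hWdef]
      rw [if_pos hR]
  have hfinal : ∫⁻ x in Ω, ENNReal.ofReal (Φ (Vlim x)) =
      ⨆ R : ℕ, ∫⁻ x in Ω, ENNReal.ofReal (Φ (W R x)) := by
    have hswap := lintegral_iSup (μ := volume.restrict Ω)
      (f := fun R x => ENNReal.ofReal (Φ (W R x)))
      (fun R => ENNReal.measurable_ofReal.comp (hΦc.measurable.comp (hWmeas R))) hWmono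
    rw [← hswap]
    apply lintegral_congr
    intro x
    exact (hsup x).symm
  rw [hfinal]
  exact iSup_le key
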